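/- (Main Theorem: bounds on the maximum spreading radius.) Fix We > 0, t0, t1 with t + t0 > 0 and t + t1 > 0 on [τ, T], a > 0, θ with 1 − cos θ > 0, and τ < t* < T. Let R, U, V, h : [τ, T] → ℝ be continuous, with R, U, V, h differentiable on the relevant subintervals, satisfying: (i) on (τ, t*] the dimensionless regularized rim-lamella system R' = U, h' = −(2/(t+t0))·(h − h_bl), V' = 2πRh·(ū − U), V·U' = 2πRh·(ū − U)² − 2πR·(1 − cos θ)/We, with h(t) ≥ h_bl(t) > 0, R(t) > 0 and V(t) > 0; (ii) initial conditions R(τ) = R_init > 0, h(τ) = h_init > 0, V(τ) = 0, and U(τ) = ū(τ) − c(τ); (iii) on [t*, T] the Regime-2 system with h* = h(t*): R' = U, V' = −2πR·h*·U, V·U' = 2πR·h*·U² − 2πR·(1 − cos θ)/We, with V(t) ≥ 0. Then, writing R_max = sup_{t ∈ [τ,T]} R(t), one has ( R_init·√(h_init) − √((1 − cos θ)/We)·(t* − τ) ) / √(h*) ≤ R_max ≤ R_init·√(h_init) / √(h*). -/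

import Mathlib

open Real

set_option maxHeartbeats 2000000 in
/-- **Main Theorem.** Bounds on the maximum spreading radius for the
dimensionless regularized rim-lamella model: Regime 1 on `(τ, t*]`, Regime 2 (with the
lamella height frozen at `h* = h(t*)`) on `[t*, T]`, with initial conditions
`R(τ) = R_init`, `h(τ) = h_init`, `V(τ) = 0`, `U(τ) = ū(τ) − c(τ)`. Then, with
`R_max = sup_{t ∈ [τ,T]} R(t)`,
`(R_init·√h_init − √((1−cos θ)/We)·(t*−τ))/√(h*) ≤ R_max ≤ R_init·√h_init/√(h*)`. -/
theorem spreading_radius_bounds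
    (We t0 t1 a θ τ tstar T R_init h_init : ℝ)
    (hWe : We > 0) (ha : a > 0) (hθ : 1 - Real.cos θ > 0)
    (hτt : τ < tstar) (htT : tstar < T)
    (hpos : ∀ t ∈ Set.Icc τ T, t + t0 > 0 ∧ t + t1 > 0)
    (R U V h hbl ubar c : ℝ → ℝ)
    (hbl_def : ∀ t, hbl t = a * Real.sqrt (t + t1))
    (hubar_def : ∀ t, ubar t = (R t / (t + t0)) * (1 - hbl t / h t))
    (hc_def : ∀ t, c t = Real.sqrt ((1 - Real.cos θ) / (We * h t)))
    -- continuity on [τ, T]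
    (hRc : ContinuousOn R (Set.Icc τ T)) (hUc : ContinuousOn U (Set.Icc τ T))
    (hVc : ContinuousOn V (Set.Icc τ T)) (hhc : ContinuousOn h (Set.Icc τ T))
    -- (i) Regime 1 on (τ, t*]
    (h1pos : ∀ t ∈ Set.Ioc τ tstar,
      hbl t > 0 ∧ h t ≥ hbl t ∧ R t > 0 ∧ V t > 0)
    (h1R : ∀ t ∈ Set.Ioc τ tstar, HasDerivAt R (U t) t)
    (h1h : ∀ t ∈ Set.Ioc τ tstar, HasDerivAt h (-(2 / (t + t0)) * (h t - hbl t)) t)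
    (h1V : ∀ t ∈ Set.Ioc τ tstar, HasDerivAt V (2 * π * R t * h t * (ubar t - U t)) t)
    (h1U : ∀ t ∈ Set.Ioc τ tstar, DifferentiableAt ℝ U t)
    (h1mom : ∀ t ∈ Set.Ioc τ tstar,
      V t * deriv U t
        = 2 * π * R t * h t * (ubar t - U t) ^ 2 - 2 * π * R t * (1 - Real.cos θ) / We)
    -- (ii) initial conditions
    (hRinit : R τ = R_init) (hhinit : h τ = h_init)
    (hRipos : R_init > 0) (hhipos : h_init > 0)
    (hV0 : V τ = 0) (hU0 : U τ = ubar τ - c τ)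
    -- (iii) Regime 2 on [t*, T], with h* = h(t*)
    (h2R : ∀ t ∈ Set.Icc tstar T, HasDerivAt R (U t) t)
    (h2V : ∀ t ∈ Set.Icc tstar T, HasDerivAt V (-(2 * π * R t * h tstar * U t)) t)
    (h2U : ∀ t ∈ Set.Icc tstar T, DifferentiableAt ℝ U t)
    (h2mom : ∀ t ∈ Set.Icc tstar T,
      V t * deriv U t
        = 2 * π * R t * h tstar * U t ^ 2 - 2 * π * R t * (1 - Real.cos θ) / We)
    (h2Vnn : ∀ t ∈ Set.Icc tstar T, V t ≥ 0) :
    (R_init * Real.sqrt h_init - Real.sqrt ((1 - Real.cos θ) / We) * (tstar - τ))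
          / Real.sqrt (h tstar)
        ≤ sSup (R '' Set.Icc τ T)
    ∧ sSup (R '' Set.Icc τ T) ≤ R_init * Real.sqrt h_init / Real.sqrt (h tstar) := by
  have hsub1 : Set.Icc τ tstar ⊆ Set.Icc τ T := Set.Icc_subset_Icc_right htT.le
  have hsub2 : Set.Icc tstar T ⊆ Set.Icc τ T := Set.Icc_subset_Icc_left hτt.le
  have hsubI : Set.Ioc τ tstar ⊆ Set.Icc τ tstar := Set.Ioc_subset_Icc_self
  have hts : tstar ∈ Set.Ioc τ tstar := ⟨hτt, le_refl _⟩
  have htsIcc : tstar ∈ Set.Icc τ T := ⟨hτt.le, htT.le⟩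
  have hτIcc : τ ∈ Set.Icc τ T := ⟨le_refl _, hτt.le.trans htT.le⟩
  have hhstar : 0 < h tstar := lt_of_lt_of_le (h1pos tstar hts).1 (h1pos tstar hts).2.1
  have hhpos : ∀ t ∈ Set.Icc τ tstar, 0 < h t := by
    intro t ht
    rcases eq_or_lt_of_le ht.1 with rfl | hlt
    · rw [hhinit]; exact hhipos
    · exact lt_of_lt_of_le (h1pos t ⟨hlt, ht.2⟩).1 (h1pos t ⟨hlt, ht.2⟩).2.1
  have hhc1 : ContinuousOn h (Set.Icc τ tstar) := hhc.mono hsub1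
  have hRc1 : ContinuousOn R (Set.Icc τ tstar) := hRc.mono hsub1
  have hVc1 : ContinuousOn V (Set.Icc τ tstar) := hVc.mono hsub1
  have hUc1 : ContinuousOn U (Set.Icc τ tstar) := hUc.mono hsub1
  -- h is antitone on [τ, t*]
  have hanti : AntitoneOn h (Set.Icc τ tstar) := by
    apply antitoneOn_of_deriv_nonpos (convex_Icc τ tstar) hhc1
    · intro x hx
      rw [interior_Icc] at hx
      exact (h1h x ⟨hx.1, hx.2.le⟩).differentiableAt.differentiableWithinAt
    · intro x hx
      rw [interior_Icc] at hx
      have hx' : x ∈ Set.Ioc τ tstar := ⟨hx.1, hx.2.le⟩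
      rw [(h1h x hx').deriv]
      have h0 : 0 < x + t0 := (hpos x (hsub1 (hsubI hx'))).1
      have h1 : 0 ≤ h x - hbl x := sub_nonneg.mpr (h1pos x hx').2.1
      have h2 : 0 ≤ 2 / (x + t0) := by positivity
      nlinarith
  have hge : ∀ t ∈ Set.Icc τ tstar, h tstar ≤ h t :=
    fun t ht => hanti ht ⟨hτt.le, le_refl _⟩ ht.2
  have hVnn1 : ∀ t ∈ Set.Icc τ tstar, 0 ≤ V t := by
    intro t ht
    rcases eq_or_lt_of_le ht.1 with rfl | hlt
    · rw [hV0]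
    · exact (h1pos t ⟨hlt, ht.2⟩).2.2.2.le
  -- volume conservation, regime 1
  have hWd : ∀ x ∈ Set.Ioo τ tstar,
      HasDerivAt (fun t => π * R t ^ 2 * h t + V t) 0 x := by
    intro x hx
    have hx' : x ∈ Set.Ioc τ tstar := ⟨hx.1, hx.2.le⟩
    have H1 := ((((h1R x hx').pow 2).const_mul π).mul (h1h x hx')).add (h1V x hx')
    refine H1.congr_deriv ?_
    rw [hubar_def x]
    have hβ : x + t0 ≠ 0 := ne_of_gt (hpos x (hsub1 (hsubI hx'))).1
    have hh0 : h x ≠ 0 := ne_of_gt (hhpos x (hsubI hx'))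
    field_simp
    simp only [Pi.pow_apply]
    ring
  have hWcont : ContinuousOn (fun t => π * R t ^ 2 * h t + V t) (Set.Icc τ tstar) :=
    ((continuousOn_const.mul (hRc1.pow 2)).mul hhc1).add hVc1
  have hWdiff : DifferentiableOn ℝ (fun t => π * R t ^ 2 * h t + V t)
      (interior (Set.Icc τ tstar)) := by
    intro x hx
    rw [interior_Icc] at hx
    exact (hWd x hx).differentiableAt.differentiableWithinAt
  have hW : ∀ t ∈ Set.Icc τ tstar, π * R t ^ 2 * h t + V t = π * R_init ^ 2 * h_init := by
    have hm : MonotoneOn (fun t => π * R t ^ 2 * h t + V t) (Set.Icc τ tstar) := by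
      apply monotoneOn_of_deriv_nonneg (convex_Icc τ tstar) hWcont hWdiff
      intro x hx
      rw [interior_Icc] at hx
      rw [(hWd x hx).deriv]
    have hm' : AntitoneOn (fun t => π * R t ^ 2 * h t + V t) (Set.Icc τ tstar) := by
      apply antitoneOn_of_deriv_nonpos (convex_Icc τ tstar) hWcont hWdiff
      intro x hx
      rw [interior_Icc] at hx
      rw [(hWd x hx).deriv]
    intro t ht
    have hτm : τ ∈ Set.Icc τ tstar := ⟨le_refl _, hτt.le⟩
    have e1 := hm hτm ht ht.1
    have e2 := hm' hτm ht ht.1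
    have : π * R τ ^ 2 * h τ + V τ = π * R_init ^ 2 * h_init := by
      rw [hRinit, hhinit, hV0]; ring
    simp only at e1 e2
    linarith
  -- volume conservation, regime 2
  have hW2d : ∀ x ∈ Set.Ioo tstar T,
      HasDerivAt (fun t => π * R t ^ 2 * h tstar + V t) 0 x := by
    intro x hx
    have hx' : x ∈ Set.Icc tstar T := ⟨hx.1.le, hx.2.le⟩
    have H1 := ((((h2R x hx').pow 2).const_mul π).mul_const (h tstar)).add (h2V x hx')
    refine H1.congr_deriv ?_
    push_cast
    ring
  have hW2cont : ContinuousOn (fun t => π * R t ^ 2 * h tstar + V t) (Set.Icc tstar T) :=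
    ((continuousOn_const.mul ((hRc.mono hsub2).pow 2)).mul continuousOn_const).add
      (hVc.mono hsub2)
  have hW2diff : DifferentiableOn ℝ (fun t => π * R t ^ 2 * h tstar + V t)
      (interior (Set.Icc tstar T)) := by
    intro x hx
    rw [interior_Icc] at hx
    exact (hW2d x hx).differentiableAt.differentiableWithinAt
  have hW2 : ∀ t ∈ Set.Icc tstar T,
      π * R t ^ 2 * h tstar + V t = π * R_init ^ 2 * h_init := by
    have hm : MonotoneOn (fun t => π * R t ^ 2 * h tstar + V t) (Set.Icc tstar T) := by
      apply monotoneOn_of_deriv_nonneg (convex_Icc tstar T) hW2cont hW2diff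
      intro x hx
      rw [interior_Icc] at hx
      rw [(hW2d x hx).deriv]
    have hm' : AntitoneOn (fun t => π * R t ^ 2 * h tstar + V t) (Set.Icc tstar T) := by
      apply antitoneOn_of_deriv_nonpos (convex_Icc tstar T) hW2cont hW2diff
      intro x hx
      rw [interior_Icc] at hx
      rw [(hW2d x hx).deriv]
    intro t ht
    have hsm : tstar ∈ Set.Icc tstar T := ⟨le_refl _, htT.le⟩
    have e1 := hm hsm ht ht.1
    have e2 := hm' hsm ht ht.1
    have e3 := hW tstar ⟨hτt.le, le_refl _⟩
    simp only at e1 e2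
    linarith
  -- upper bound for R on [τ, T]
  have hsql : 0 < Real.sqrt (h tstar) := Real.sqrt_pos.2 hhstar
  set B := R_init * Real.sqrt h_init / Real.sqrt (h tstar) with hBdef
  have hBpos : 0 ≤ B := by positivity
  have hB2 : B ^ 2 = R_init ^ 2 * h_init / h tstar := by
    rw [hBdef, div_pow, mul_pow, Real.sq_sqrt hhipos.le, Real.sq_sqrt hhstar.le]
  have hub : ∀ t ∈ Set.Icc τ T, R t ≤ B := by
    intro t ht
    have key : R t ^ 2 * h tstar ≤ R_init ^ 2 * h_init := by
      rcases le_total t tstar with h' | h'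
      · have ht1 : t ∈ Set.Icc τ tstar := ⟨ht.1, h'⟩
        have e := hW t ht1
        have hV := hVnn1 t ht1
        have hh := hge t ht1
        nlinarith [Real.pi_pos, mul_nonneg (mul_nonneg Real.pi_pos.le (sq_nonneg (R t)))
          (sub_nonneg.2 hh)]
      · have ht1 : t ∈ Set.Icc tstar T := ⟨h', ht.2⟩
        have e := hW2 t ht1
        have hV := h2Vnn t ht1
        nlinarith [Real.pi_pos]
    have hsq : R t ^ 2 ≤ B ^ 2 := by
      rw [hB2, le_div_iff₀ hhstar]; exact key
    calc R t ≤ |R t| := le_abs_self _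
      _ = Real.sqrt (R t ^ 2) := (Real.sqrt_sq_eq_abs _).symm
      _ ≤ Real.sqrt (B ^ 2) := Real.sqrt_le_sqrt hsq
      _ = B := by rw [Real.sqrt_sq hBpos]
  have hne : (R '' Set.Icc τ T).Nonempty :=
    ⟨R τ, ⟨τ, hτIcc, rfl⟩⟩
  have hbdd : BddAbove (R '' Set.Icc τ T) := by
    refine ⟨B, ?_⟩
    rintro y ⟨t, ht, rfl⟩
    exact hub t ht
  have hupper : sSup (R '' Set.Icc τ T) ≤ B := by
    apply csSup_le hne
    rintro y ⟨t, ht, rfl⟩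
    exact hub t ht
  -- key inequality: ubar - U ≤ c on [τ, t*]
  have hFnn : ∀ t ∈ Set.Icc τ tstar, 0 ≤ c t - ubar t + U t := by
    -- continuity of the auxiliary function
    have hblcont : ContinuousOn hbl (Set.Icc τ tstar) := by
      have : Continuous (fun t : ℝ => a * Real.sqrt (t + t1)) := by
        exact continuous_const.mul (Real.continuous_sqrt.comp (continuous_id.add continuous_const))
      exact this.continuousOn.congr (fun t _ => hbl_def t)
    have hubcont : ContinuousOn ubar (Set.Icc τ tstar) := by
      have : ContinuousOn (fun t => (R t / (t + t0)) * (1 - hbl t / h t)) (Set.Icc τ tstar) := by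
        apply ContinuousOn.mul
        · exact hRc1.div (continuousOn_id.add continuousOn_const)
            (fun t ht => ne_of_gt (hpos t (hsub1 ht)).1)
        · exact continuousOn_const.sub
            (hblcont.div hhc1 (fun t ht => ne_of_gt (hhpos t ht)))
      exact this.congr (fun t _ => hubar_def t)
    have hccont : ContinuousOn c (Set.Icc τ tstar) := by
      have : ContinuousOn (fun t => Real.sqrt ((1 - Real.cos θ) / (We * h t)))
          (Set.Icc τ tstar) := by
        apply Real.continuous_sqrt.comp_continuousOn
        exact continuousOn_const.div (continuousOn_const.mul hhc1)
          (fun t ht => ne_of_gt (mul_pos hWe (hhpos t ht)))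
      exact this.congr (fun t _ => hc_def t)
    have hFcont : ContinuousOn (fun t => c t - ubar t + U t) (Set.Icc τ tstar) :=
      (hccont.sub hubcont).add hUc1
    by_contra hcon
    push_neg at hcon
    obtain ⟨t₁, ht₁, hneg⟩ := hcon
    have ht₁τ : τ < t₁ := by
      rcases eq_or_lt_of_le ht₁.1 with rfl | hlt
      · rw [hU0] at hneg; linarith
      · exact hlt
    have hIccsub : Set.Icc τ t₁ ⊆ Set.Icc τ tstar := Set.Icc_subset_Icc_right ht₁.2
    set S := {t ∈ Set.Icc τ t₁ | 0 ≤ c t - ubar t + U t} with hSdef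
    have hτS : τ ∈ S := by
      refine ⟨⟨le_refl _, ht₁τ.le⟩, ?_⟩
      rw [hU0]; ring_nf; exact le_refl _
    have hSne : S.Nonempty := ⟨τ, hτS⟩
    have hSbdd : BddAbove S := ⟨t₁, fun t ht => ht.1.2⟩
    have hSclosed : IsClosed S := by
      have : S = Set.Icc τ t₁ ∩ (fun t => c t - ubar t + U t) ⁻¹' Set.Ici 0 := by
        ext t; simp [hSdef, Set.mem_sep_iff, and_comm]
      rw [this]
      exact (hFcont.mono hIccsub).preimage_isClosed_of_isClosed isClosed_Icc isClosed_Ici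
    have hs0S : sSup S ∈ S := hSclosed.csSup_mem hSne hSbdd
    set s0 := sSup S with hs0def
    have hs0le : s0 ≤ t₁ := csSup_le hSne (fun t ht => ht.1.2)
    have hs0lt : s0 < t₁ := by
      rcases eq_or_lt_of_le hs0le with heq | hlt
      · exfalso; rw [heq] at hs0S; exact absurd hs0S.2 (not_le.2 hneg)
      · exact hlt
    have hs0τ : τ ≤ s0 := hs0S.1.1
    have hbad : ∀ t ∈ Set.Ioc s0 t₁, c t - ubar t + U t < 0 := by
      intro t ht
      by_contra hge'
      push_neg at hge'
      have htS : t ∈ S := ⟨⟨hs0τ.trans ht.1.le, ht.2⟩, hge'⟩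
      exact absurd (le_csSup hSbdd htS) (not_le.2 ht.1)
    have hmono : StrictMonoOn (fun t => c t - ubar t + U t) (Set.Icc s0 t₁) := by
      apply strictMonoOn_of_deriv_pos (convex_Icc s0 t₁)
        (hFcont.mono (fun t ht => hIccsub ⟨hs0τ.trans ht.1, ht.2⟩))
      intro x hx
      rw [interior_Icc] at hx
      have hxI : x ∈ Set.Ioc τ tstar := ⟨lt_of_le_of_lt hs0τ hx.1, hx.2.le.trans ht₁.2⟩
      have hxIcc : x ∈ Set.Icc τ tstar := hsubI hxI
      have hFx : c x - ubar x + U x < 0 := hbad x ⟨hx.1, hx.2.le⟩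
      obtain ⟨hblx, hhbl_le, hRx, hVx⟩ := h1pos x hxI
      have hβ : 0 < x + t0 := (hpos x (hsub1 hxIcc)).1
      have hb1 : 0 < x + t1 := (hpos x (hsub1 hxIcc)).2
      have hhx : 0 < h x := hhpos x hxIcc
      have hcx : 0 ≤ c x := by rw [hc_def]; exact Real.sqrt_nonneg _
      have hw : c x < ubar x - U x := by linarith
      have hUlt : U x < ubar x := by linarith
      have hsb : 0 < Real.sqrt (x + t1) := Real.sqrt_pos.2 hb1
      -- derivatives of the pieces
      have Hadd : HasDerivAt (fun t : ℝ => t + t1) 1 x := by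
        simpa using (hasDerivAt_id x).add_const t1
      have Hbl : HasDerivAt hbl (a * (1 / (2 * Real.sqrt (x + t1)))) x :=
        ((Hadd.sqrt (ne_of_gt hb1)).const_mul a).congr_of_eventuallyEq
          (Filter.Eventually.of_forall hbl_def)
      have Hh := h1h x hxI
      have HR := h1R x hxI
      have HU : HasDerivAt U (deriv U x) x := (h1U x hxI).hasDerivAt
      have Hid : HasDerivAt (fun t : ℝ => t + t0) 1 x := by
        simpa using (hasDerivAt_id x).add_const t0
      have H1 : HasDerivAt (fun t => R t / (t + t0))
          ((U x * (x + t0) - R x * 1) / (x + t0) ^ 2) x := HR.div Hid (ne_of_gt hβ)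
      have H2 : HasDerivAt (fun t => hbl t / h t)
          ((a * (1 / (2 * Real.sqrt (x + t1))) * h x
            - hbl x * (-(2 / (x + t0)) * (h x - hbl x))) / (h x) ^ 2) x :=
        Hbl.div Hh (ne_of_gt hhx)
      have H3 := H2.const_sub 1
      have Hubar : HasDerivAt ubar
          ((U x * (x + t0) - R x * 1) / (x + t0) ^ 2 * (1 - hbl x / h x)
            + R x / (x + t0) * -((a * (1 / (2 * Real.sqrt (x + t1))) * h x
              - hbl x * (-(2 / (x + t0)) * (h x - hbl x))) / (h x) ^ 2)) x :=
        (H1.mul H3).congr_of_eventuallyEq (Filter.Eventually.of_forall hubar_def)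
      have hWh : (0:ℝ) < (1 - Real.cos θ) / (We * h x) := by positivity
      have HcI : HasDerivAt (fun t => (1 - Real.cos θ) / (We * h t))
          ((0 * (We * h x) - (1 - Real.cos θ)
            * (We * (-(2 / (x + t0)) * (h x - hbl x)))) / (We * h x) ^ 2) x :=
        (hasDerivAt_const x _).div (Hh.const_mul We) (ne_of_gt (mul_pos hWe hhx))
      have Hc : HasDerivAt c
          (((0 * (We * h x) - (1 - Real.cos θ)
            * (We * (-(2 / (x + t0)) * (h x - hbl x)))) / (We * h x) ^ 2)
            / (2 * Real.sqrt ((1 - Real.cos θ) / (We * h x)))) x :=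
        (HcI.sqrt (ne_of_gt hWh)).congr_of_eventuallyEq (Filter.Eventually.of_forall hc_def)
      have HF := (Hc.sub Hubar).add HU
      rw [show (fun t => c t - ubar t + U t) = c - ubar + U from rfl, HF.deriv]
      -- (a) the capillary-speed term is nondecreasing
      have hDc : 0 ≤ ((0 * (We * h x) - (1 - Real.cos θ)
            * (We * (-(2 / (x + t0)) * (h x - hbl x)))) / (We * h x) ^ 2)
            / (2 * Real.sqrt ((1 - Real.cos θ) / (We * h x))) := by
        apply div_nonneg
        apply div_nonneg
        · have h1 : 0 ≤ h x - hbl x := sub_nonneg.mpr hhbl_le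
          have h2 : (0:ℝ) ≤ 2 / (x + t0) := by positivity
          nlinarith [mul_nonneg (mul_nonneg (mul_nonneg hθ.le hWe.le) h2) h1]
        · positivity
        · positivity
      -- (b) the lamella-velocity term is nonincreasing
      have hDub : (U x * (x + t0) - R x * 1) / (x + t0) ^ 2 * (1 - hbl x / h x)
            + R x / (x + t0) * -((a * (1 / (2 * Real.sqrt (x + t1))) * h x
              - hbl x * (-(2 / (x + t0)) * (h x - hbl x))) / (h x) ^ 2) ≤ 0 := by
        have hu' : U x * ((x + t0) * h x) < R x * (h x - hbl x) := by
          have e : ubar x = R x * (h x - hbl x) / ((x + t0) * h x) := by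
            rw [hubar_def]; field_simp
          rw [e] at hUlt
          exact (lt_div_iff₀ (by positivity)).1 hUlt
        have hq : 0 ≤ a * (1 / (2 * Real.sqrt (x + t1))) := by positivity
        have hfact : (U x * (x + t0) - R x * 1) / (x + t0) ^ 2 * (1 - hbl x / h x)
            + R x / (x + t0) * -((a * (1 / (2 * Real.sqrt (x + t1))) * h x
              - hbl x * (-(2 / (x + t0)) * (h x - hbl x))) / (h x) ^ 2)
            = ((U x * (x + t0) - R x) * (h x - hbl x) * h x
              - R x * (x + t0) * (a * (1 / (2 * Real.sqrt (x + t1)))) * h x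
              - 2 * R x * hbl x * (h x - hbl x)) / ((x + t0) ^ 2 * h x ^ 2) := by
          field_simp
          ring
        rw [hfact]
        apply div_nonpos_of_nonpos_of_nonneg _ (by positivity)
        have h1 : 0 ≤ h x - hbl x := sub_nonneg.mpr hhbl_le
        nlinarith [mul_nonneg h1 (sub_nonneg.2 hu'.le),
          mul_nonneg (mul_nonneg hRx.le hblx.le) h1,
          mul_nonneg (mul_nonneg (mul_nonneg hRx.le hβ.le) hq) hhx.le]
      -- (c) the rim decelerates: deriv U x > 0
      have hc2 : c x ^ 2 = (1 - Real.cos θ) / (We * h x) := by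
        rw [hc_def]; exact Real.sq_sqrt hWh.le
      have hcw : c x ^ 2 < (ubar x - U x) ^ 2 := by nlinarith
      have hhc2 : h x * c x ^ 2 = (1 - Real.cos θ) / We := by
        rw [hc2]; field_simp
      have hmompos : 0 < V x * deriv U x := by
        rw [h1mom x hxI]
        have : 2 * π * R x * h x * (ubar x - U x) ^ 2 - 2 * π * R x * (1 - Real.cos θ) / We
            = 2 * π * R x * (h x * (ubar x - U x) ^ 2 - h x * c x ^ 2) := by
          rw [hhc2]; ring
        rw [this]
        have : 0 < h x * (ubar x - U x) ^ 2 - h x * c x ^ 2 := by nlinarith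
        positivity
      have hdU : 0 < deriv U x := by
        rcases mul_pos_iff.1 hmompos with ⟨_, hp⟩ | ⟨hn, _⟩
        · exact hp
        · linarith
      linarith
    have hcmp := hmono (Set.left_mem_Icc.2 hs0lt.le) (Set.right_mem_Icc.2 hs0lt.le) hs0lt
    have h0 : 0 ≤ c s0 - ubar s0 + U s0 := hs0S.2
    have hlast := hbad t₁ ⟨hs0lt, le_refl _⟩
    simp only at hcmp
    linarith
  -- monotone quantity Y = R √h + √C t
  have hYmono : MonotoneOn
      (fun t => R t * Real.sqrt (h t) + Real.sqrt ((1 - Real.cos θ) / We) * t)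
      (Set.Icc τ tstar) := by
    have hcont : ContinuousOn
        (fun t => R t * Real.sqrt (h t) + Real.sqrt ((1 - Real.cos θ) / We) * t)
        (Set.Icc τ tstar) :=
      (hRc1.mul (Real.continuous_sqrt.comp_continuousOn hhc1)).add
        (continuousOn_const.mul continuousOn_id)
    have hder : ∀ x ∈ Set.Ioo τ tstar,
        HasDerivAt (fun t => R t * Real.sqrt (h t) + Real.sqrt ((1 - Real.cos θ) / We) * t)
          (U x * Real.sqrt (h x)
            + R x * ((-(2 / (x + t0)) * (h x - hbl x)) / (2 * Real.sqrt (h x)))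
            + Real.sqrt ((1 - Real.cos θ) / We) * 1) x := by
      intro x hx
      have hx' : x ∈ Set.Ioc τ tstar := ⟨hx.1, hx.2.le⟩
      have hhx : 0 < h x := hhpos x (hsubI hx')
      exact ((h1R x hx').mul ((h1h x hx').sqrt (ne_of_gt hhx))).add
        ((hasDerivAt_id x).const_mul (Real.sqrt ((1 - Real.cos θ) / We)))
    apply monotoneOn_of_deriv_nonneg (convex_Icc τ tstar) hcont
    · intro x hx; rw [interior_Icc] at hx
      exact (hder x hx).differentiableAt.differentiableWithinAt
    · intro x hx; rw [interior_Icc] at hx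
      rw [(hder x hx).deriv]
      have hx' : x ∈ Set.Ioc τ tstar := ⟨hx.1, hx.2.le⟩
      have hxIcc : x ∈ Set.Icc τ tstar := hsubI hx'
      have hhx : 0 < h x := hhpos x hxIcc
      have hβ : 0 < x + t0 := (hpos x (hsub1 hxIcc)).1
      have hsq : Real.sqrt (h x) * Real.sqrt (h x) = h x := Real.mul_self_sqrt hhx.le
      have hs0 : 0 < Real.sqrt (h x) := Real.sqrt_pos.2 hhx
      have hcs : c x * Real.sqrt (h x) = Real.sqrt ((1 - Real.cos θ) / We) := by
        rw [hc_def, ← Real.sqrt_mul (by positivity) (h x)]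
        congr 1
        field_simp
      have e1 : R x * ((-(2 / (x + t0)) * (h x - hbl x)) / (2 * Real.sqrt (h x)))
          = -(ubar x * Real.sqrt (h x)) := by
        rw [hubar_def]
        field_simp
        linear_combination (R x * (h x - hbl x)) * hsq
      have hFx := hFnn x hxIcc
      have h2 : (ubar x - c x) * Real.sqrt (h x) ≤ U x * Real.sqrt (h x) :=
        mul_le_mul_of_nonneg_right (by linarith) (Real.sqrt_nonneg _)
      rw [sub_mul, hcs] at h2
      rw [e1]
      linarith
  have hYle := hYmono ⟨le_refl τ, hτt.le⟩ ⟨hτt.le, le_refl tstar⟩ hτt.le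
  simp only [hRinit, hhinit] at hYle
  have hRts : R tstar ≤ sSup (R '' Set.Icc τ T) := le_csSup hbdd ⟨tstar, htsIcc, rfl⟩
  constructor
  · have hlow : (R_init * Real.sqrt h_init - Real.sqrt ((1 - Real.cos θ) / We) * (tstar - τ))
        / Real.sqrt (h tstar) ≤ R tstar := by
      rw [div_le_iff₀ hsql]
      nlinarith [hYle]
    linarith
  · exact hupper
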